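/- Let {f_k} be a nonincreasing sequence of real numbers bounded below, and let {Delta_k} be a sequence of positive reals. Suppose there exist constants eta_1 > 0, kappa > 0 and an infinite set S ⊆ N (the 'successful' iterations) such that f_k - f_{k+1} >= kappa * Delta_k^2 for all k ∈ S, f_{k+1} = f_k for k ∉ S, and such that there exist 0 < gamma_d < 1 <= gamma_i with Delta_{k+1} = gamma_i Delta_k for k ∈ S and Delta_{k+1} = gamma_d Delta_k for k ∉ S. Then lim_{k→∞} Delta_k = 0. -/

import Mathlib

open Filter Topology

theorem stmt3
    (f Δ : ℕ → ℝ) (fstar η₁ κ γd γi : ℝ) (S : Set ℕ)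
    (hmono : Antitone f)
    (hlb : ∀ k, fstar ≤ f k)
    (hΔpos : ∀ k, 0 < Δ k)
    (hη₁ : 0 < η₁) (hκ : 0 < κ)
    (hS : S.Infinite)
    (hdec : ∀ k ∈ S, f k - f (k + 1) ≥ κ * Δ k ^ 2)
    (hsame : ∀ k ∉ S, f (k + 1) = f k)
    (hγd : 0 < γd) (hγd1 : γd < 1) (hγi : 1 ≤ γi)
    (hinc : ∀ k ∈ S, Δ (k + 1) = γi * Δ k)
    (hdecΔ : ∀ k ∉ S, Δ (k + 1) = γd * Δ k) :
    Tendsto Δ atTop (nhds 0) := by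
  have hfg : ∀ k, 0 ≤ f k - f (k + 1) := fun k => sub_nonneg.2 (hmono (Nat.le_succ k))
  have hsum : Summable (fun k => f k - f (k + 1)) := by
    apply summable_of_sum_range_le (c := f 0 - fstar) hfg
    intro n
    rw [Finset.sum_range_sub' f n]
    linarith [hlb n]
  have htend := hsum.tendsto_atTop_zero
  rw [Metric.tendsto_atTop]
  intro ε hε
  have hγi0 : 0 < γi := lt_of_lt_of_le one_pos hγi
  set c := ε / γi with hc
  have hc0 : 0 < c := div_pos hε hγi0
  have hcε : γi * c = ε := by rw [hc, mul_div_assoc']; exact mul_div_cancel_left₀ ε hγi0.ne'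
  have hcle : c ≤ ε := by
    rw [hc, div_le_iff₀ hγi0]; nlinarith
  obtain ⟨N, hN⟩ := Metric.tendsto_atTop.1 htend (κ * c ^ 2) (by positivity)
  have hsmall : ∀ k ∈ S, N ≤ k → Δ k < c := by
    intro k hk hNk
    have h1 := hdec k hk
    have h2 := hN k hNk
    rw [Real.dist_eq, sub_zero, abs_of_nonneg (hfg k)] at h2
    have h3 : κ * Δ k ^ 2 < κ * c ^ 2 := lt_of_le_of_lt h1 h2
    have hΔ2 : Δ k ^ 2 < c ^ 2 := (mul_lt_mul_iff_right₀ hκ).1 h3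
    nlinarith [hΔpos k]
  obtain ⟨s, hsS, hsN⟩ := hS.exists_gt N
  have key : ∀ k, Δ (s + k) < ε ∧ (s + k ∈ S → Δ (s + k) < c) := by
    intro k
    induction k with
    | zero =>
      refine ⟨lt_of_lt_of_le (hsmall s hsS hsN.le) hcle, fun _ => hsmall s hsS hsN.le⟩
    | succ n ih =>
      have h2 : s + (n + 1) ∈ S → Δ (s + (n + 1)) < c :=
        fun h => hsmall _ h (by omega)
      refine ⟨?_, h2⟩
      by_cases hmem : s + n ∈ S
      · rw [show s + (n + 1) = (s + n) + 1 from rfl, hinc _ hmem]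
        calc γi * Δ (s + n) < γi * c := (mul_lt_mul_iff_right₀ hγi0).2 (ih.2 hmem)
          _ = ε := hcε
      · rw [show s + (n + 1) = (s + n) + 1 from rfl, hdecΔ _ hmem]
        nlinarith [hΔpos (s + n), ih.1]
  refine ⟨s, fun n hn => ?_⟩
  rw [Real.dist_eq, sub_zero, abs_of_pos (hΔpos n)]
  obtain ⟨k, rfl⟩ := Nat.exists_eq_add_of_le hn
  exact (key k).1
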